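/- arXiv:1805.09539 — 3 statements merged into one kernel-verified Lean document; each statement's English description precedes it below -/
import Mathlib

section
/- Let $A$ be the point–$k$-space incidence matrix of $\mathrm{PG}(n,q)$ with $n \geq 2k+1$, and let $\mathcal{L}$ be a set of $k$-subspaces with characteristic vector $\chi$ satisfying $\chi \in (\ker A)^{\perp}$ (row space of $A$). Set $x = |\mathcal{L}| / \binom{n}{k}_q$. Then for every $k$-subspace $\pi$, the number of elements of $\mathcal{L}$ disjoint from $\pi$ equals $(x - \chi(\pi)) \binom{n-k-1}{k}_q \, q^{k^2+k}$. -/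
open Finset
open scoped Classical

/-- The Gaussian binomial coefficient `[a choose b]_q`, defined via the
`q`-Pascal recurrence `[a+1, b+1]_q = [a, b]_q + q^(b+1) * [a, b+1]_q`. -/
def gbinom (q : ℕ) : ℕ → ℕ → ℕ
  | _, 0 => 1
  | 0, _+1 => 0
  | a+1, b+1 => gbinom q a b + q^(b+1) * gbinom q a (b+1)
section Counting

open Submodule Module

variable {K : Type} [Field K] [Fintype K]

private theorem finiteV (V : Type) [AddCommGroup V] [Module K V] [FiniteDimensional K V] :
    Finite V := Module.finite_of_finite K

private theorem finiteSub {V : Type} [AddCommGroup V] [Module K V] [FiniteDimensional K V] :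
    Finite (Submodule K V) := by
  have : Finite V := finiteV (K := K) V
  exact Finite.of_injective (fun W => (W : Set V)) SetLike.coe_injective

/-- Cardinality of the space of linear maps. -/
private theorem card_hom {M N : Type} [AddCommGroup M] [Module K M] [FiniteDimensional K M]
    [AddCommGroup N] [Module K N] [FiniteDimensional K N] :
    Nat.card (M →ₗ[K] N) = Fintype.card K ^ (finrank K M * finrank K N) := by
  have : Finite M := finiteV (K := K) M
  have : Finite N := finiteV (K := K) N
  have : Finite (M →ₗ[K] N) :=
    Finite.of_injective (fun f => (f : M → N)) DFunLike.coe_injective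
  have : Fintype (M →ₗ[K] N) := Fintype.ofFinite _
  rw [Nat.card_eq_fintype_card, card_eq_pow_finrank (K := K), Module.finrank_linearMap]

/-- Cardinality of projections onto a subspace. -/
private theorem card_proj {V : Type} [AddCommGroup V] [Module K V] [FiniteDimensional K V]
    (p : Submodule K V) :
    Nat.card {f : V →ₗ[K] p // ∀ x : p, f x = x}
      = Fintype.card K ^ ((finrank K V - finrank K p) * finrank K p) := by
  obtain ⟨C, hC⟩ := Submodule.exists_isCompl p
  let f₀ : V →ₗ[K] p := Submodule.linearProjOfIsCompl p C hC
  have hf₀ : ∀ x : p, f₀ x = x := fun x => Submodule.linearProjOfIsCompl_apply_left hC x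
  have e1 : {f : V →ₗ[K] p // ∀ x : p, f x = x} ≃ {g : V →ₗ[K] p // p ≤ LinearMap.ker g} :=
    { toFun := fun f => ⟨f.1 - f₀, by
        intro x hx
        simp only [LinearMap.mem_ker, LinearMap.sub_apply]
        rw [f.2 ⟨x, hx⟩, hf₀ ⟨x, hx⟩, sub_self]⟩
      invFun := fun g => ⟨g.1 + f₀, by
        intro x
        simp only [LinearMap.add_apply]
        rw [hf₀ x, show g.1 x = 0 from g.2 x.2, zero_add]⟩
      left_inv := fun f => by ext x; simp
      right_inv := fun g => by ext x; simp }
  have e2 : {g : V →ₗ[K] p // p ≤ LinearMap.ker g} ≃ ((V ⧸ p) →ₗ[K] p) :=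
    { toFun := fun g => p.liftQ g.1 g.2
      invFun := fun h => ⟨h ∘ₗ p.mkQ, by
        intro x hx
        simp [Submodule.Quotient.mk_eq_zero p |>.2 hx, (Submodule.Quotient.mk_eq_zero p).2 hx]⟩
      left_inv := fun g => by
        apply Subtype.ext
        ext x
        simp [Submodule.liftQ_apply]
      right_inv := fun h => by
        apply Submodule.linearMap_qext
        ext x
        simp [Submodule.liftQ_apply] }
  rw [Nat.card_congr (e1.trans e2), card_hom]
  have h := Submodule.finrank_quotient_add_finrank p
  have h2 : finrank K (V ⧸ p) = finrank K V - finrank K p := by omega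
  rw [h2]

/-- Number of complements of a subspace. -/
private theorem card_complSub {V : Type} [AddCommGroup V] [Module K V] [FiniteDimensional K V]
    (p : Submodule K V) :
    Nat.card {W : Submodule K V // IsCompl p W}
      = Fintype.card K ^ ((finrank K V - finrank K p) * finrank K p) := by
  rw [Nat.card_congr (Submodule.isComplEquivProj p), card_proj]

end Counting

section Counting2

open Submodule Module

variable {K : Type} [Field K] [Fintype K]
variable {V : Type} [AddCommGroup V] [Module K V] [FiniteDimensional K V]

/-- Number of relative complements of `p` inside `t`. -/
private theorem card_relCompl {p t : Submodule K V} (hpt : p ≤ t) :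
    Nat.card {W : Submodule K V // W ⊓ p = ⊥ ∧ p ⊔ W = t}
      = Fintype.card K ^ ((finrank K t - finrank K p) * finrank K p) := by
  have hι : Function.Injective t.subtype := Submodule.injective_subtype t
  have hmapcomap : ∀ W : Submodule K V, map t.subtype (comap t.subtype W) = t ⊓ W :=
    fun W => Submodule.map_comap_subtype t W
  have hmappt : map t.subtype (comap t.subtype p) = p := by
    rw [hmapcomap, inf_eq_right.mpr hpt]
  have fwd : ∀ W : Submodule K V, W ⊓ p = ⊥ → p ⊔ W = t →
      IsCompl (comap t.subtype p) (comap t.subtype W) := by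
    intro W hW1 hW2
    have hWt : W ≤ t := by rw [← hW2]; exact le_sup_right
    constructor
    · have hW1' : p ⊓ W = ⊥ := by rw [inf_comm]; exact hW1
      rw [_root_.disjoint_iff, ← Submodule.comap_inf, hW1', Submodule.comap_bot,
        Submodule.ker_subtype]
    · rw [_root_.codisjoint_iff]
      apply Submodule.map_injective_of_injective hι
      rw [Submodule.map_sup, hmappt, hmapcomap, inf_eq_right.mpr hWt,
        hW2, Submodule.map_top, Submodule.range_subtype]
  have bwd : ∀ Wt : Submodule K t, IsCompl (comap t.subtype p) Wt →
      map t.subtype Wt ⊓ p = ⊥ ∧ p ⊔ map t.subtype Wt = t := by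
    intro Wt hWt
    constructor
    · calc map t.subtype Wt ⊓ p = map t.subtype Wt ⊓ map t.subtype (comap t.subtype p) := by
            rw [hmappt]
        _ = map t.subtype (Wt ⊓ comap t.subtype p) := (Submodule.map_inf _ hι).symm
        _ = ⊥ := by rw [inf_comm, _root_.disjoint_iff.mp hWt.disjoint, Submodule.map_bot]
    · calc p ⊔ map t.subtype Wt = map t.subtype (comap t.subtype p) ⊔ map t.subtype Wt := by
            rw [hmappt]
        _ = map t.subtype (comap t.subtype p ⊔ Wt) := (Submodule.map_sup _ _ _).symm
        _ = t := by rw [_root_.codisjoint_iff.mp hWt.codisjoint, Submodule.map_top,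
            Submodule.range_subtype]
  let e : {W : Submodule K V // W ⊓ p = ⊥ ∧ p ⊔ W = t}
      ≃ {Wt : Submodule K t // IsCompl (comap t.subtype p) Wt} :=
    { toFun := fun W => ⟨comap t.subtype W.1, fwd W.1 W.2.1 W.2.2⟩
      invFun := fun Wt => ⟨map t.subtype Wt.1, bwd Wt.1 Wt.2⟩
      left_inv := fun W => by
        obtain ⟨W, hW1, hW2⟩ := W
        apply Subtype.ext
        simp only [hmapcomap]
        exact inf_eq_right.mpr (by rw [← hW2]; exact le_sup_right)
      right_inv := fun Wt => by
        apply Subtype.ext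
        simp only [Submodule.comap_map_eq, Submodule.ker_subtype, sup_bot_eq] }
  rw [Nat.card_congr e, card_complSub,
    (Submodule.comapSubtypeEquivOfLe hpt).finrank_eq]

/-- Dimension of preimage under the quotient map. -/
private theorem finrank_comap_mkQ (p : Submodule K V) (W'' : Submodule K (V ⧸ p)) :
    finrank K (comap p.mkQ W'') = finrank K W'' + finrank K p := by
  have h1 : p ≤ comap p.mkQ W'' := by
    intro x hx
    simp only [Submodule.mem_comap, Submodule.mkQ_apply,
      (Submodule.Quotient.mk_eq_zero p).mpr hx, Submodule.zero_mem]
  have h := LinearMap.finrank_range_add_finrank_ker (p.mkQ.domRestrict (comap p.mkQ W''))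
  rw [LinearMap.range_domRestrict, LinearMap.ker_domRestrict, Submodule.ker_mkQ,
    Submodule.map_comap_eq, Submodule.range_mkQ, top_inf_eq] at h
  rw [(Submodule.comapSubtypeEquivOfLe h1).finrank_eq] at h
  omega

/-- Quotient map preserves dimension on subspaces disjoint from the kernel. -/
private theorem finrank_map_mkQ (p : Submodule K V) {W : Submodule K V} (hW : W ⊓ p = ⊥) :
    finrank K (map p.mkQ W) = finrank K W := by
  have hinj : Function.Injective (p.mkQ.domRestrict W) := by
    intro x y hxy
    have : (x : V) - y ∈ p := by
      rw [← Submodule.Quotient.eq p]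
      exact hxy
    have hmem : (x : V) - y ∈ W ⊓ p := ⟨sub_mem x.2 y.2, this⟩
    rw [hW] at hmem
    exact Subtype.ext (by simpa [sub_eq_zero] using hmem)
  have := LinearMap.finrank_range_of_inj hinj
  rwa [LinearMap.range_domRestrict] at this

/-- Counting subspaces containing `p`, with a predicate on the quotient image. -/
private theorem card_contain (p : Submodule K V) (r : ℕ) (Q : Submodule K (V ⧸ p) → Prop) :
    Nat.card {W : Submodule K V // p ≤ W ∧ finrank K W = finrank K p + r ∧ Q (map p.mkQ W)}
      = Nat.card {W'' : Submodule K (V ⧸ p) // finrank K W'' = r ∧ Q W''} := by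
  apply Nat.card_congr
  have hcm : ∀ W : Submodule K V, p ≤ W → comap p.mkQ (map p.mkQ W) = W := by
    intro W hW
    rw [Submodule.comap_map_mkQ, sup_eq_right.mpr hW]
  have hmc : ∀ W'' : Submodule K (V ⧸ p), map p.mkQ (comap p.mkQ W'') = W'' := by
    intro W''
    rw [Submodule.map_comap_eq, Submodule.range_mkQ, top_inf_eq]
  have hle : ∀ W'' : Submodule K (V ⧸ p), p ≤ comap p.mkQ W'' := by
    intro W'' x hx
    simp only [Submodule.mem_comap, Submodule.mkQ_apply,
      (Submodule.Quotient.mk_eq_zero p).mpr hx, Submodule.zero_mem]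
  refine ⟨fun W => ⟨map p.mkQ W.1, ?_, W.2.2.2⟩,
    fun W'' => ⟨comap p.mkQ W''.1, hle _, ?_, by rw [hmc]; exact W''.2.2⟩, ?_, ?_⟩
  · have h1 := W.2.1
    have h2 := W.2.2.1
    have h3 := finrank_comap_mkQ p (map p.mkQ W.1)
    rw [hcm W.1 h1] at h3
    omega
  · rw [finrank_comap_mkQ]
    have := W''.2.1
    omega
  · intro W
    exact Subtype.ext (hcm W.1 W.2.1)
  · intro W''
    exact Subtype.ext (hmc W''.1)

end Counting2
section Counting3

open Submodule Module

variable {K : Type} [Field K] [Fintype K]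
variable {V : Type} [AddCommGroup V] [Module K V] [FiniteDimensional K V]

private theorem nat_card_split {α : Type} [Finite α] (P Q : α → Prop) :
    Nat.card {a : α // P a} = Nat.card {a // P a ∧ Q a} + Nat.card {a // P a ∧ ¬ Q a} := by
  have : Fintype α := Fintype.ofFinite _
  rw [Nat.card_eq_fintype_card, Nat.card_eq_fintype_card, Nat.card_eq_fintype_card,
    Fintype.card_subtype, Fintype.card_subtype, Fintype.card_subtype,
    ← Finset.filter_filter, ← Finset.filter_filter]
  exact (Finset.card_filter_add_card_filter_not (s := Finset.univ.filter P) Q).symm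

/-- Counting `r`-dimensional subspaces disjoint from `p`, fibered over the quotient. -/
private theorem card_disjoint (p : Submodule K V) (r M : ℕ)
    (h : Nat.card {W'' : Submodule K (V ⧸ p) // finrank K W'' = r} = M) :
    Nat.card {W : Submodule K V // finrank K W = r ∧ W ⊓ p = ⊥}
      = M * Fintype.card K ^ (finrank K p * r) := by
  have : Finite (Submodule K V) := finiteSub
  have : Finite (Submodule K (V ⧸ p)) := finiteSub
  have : Fintype (Submodule K V) := Fintype.ofFinite _
  have : Fintype (Submodule K (V ⧸ p)) := Fintype.ofFinite _
  have hmkp : map p.mkQ p = ⊥ := by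
    rw [eq_bot_iff]
    intro y hy
    obtain ⟨z, hz, rfl⟩ := Submodule.mem_map.mp hy
    simpa using (Submodule.Quotient.mk_eq_zero p).mpr hz
  rw [Nat.card_eq_fintype_card, Fintype.card_subtype]
  rw [Finset.card_eq_sum_card_fiberwise (f := fun W => map p.mkQ W)
    (t := Finset.univ.filter fun W'' : Submodule K (V ⧸ p) => finrank K W'' = r)
    (fun W hW => by
      rw [Finset.mem_coe, Finset.mem_filter] at hW
      rw [Finset.mem_coe, Finset.mem_filter]
      exact ⟨Finset.mem_univ _, by rw [finrank_map_mkQ p hW.2.2]; exact hW.2.1⟩)]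
  have hterm : ∀ W'' ∈ Finset.univ.filter fun W'' : Submodule K (V ⧸ p) => finrank K W'' = r,
      ((Finset.univ.filter fun W : Submodule K V => finrank K W = r ∧ W ⊓ p = ⊥).filter
        fun W => map p.mkQ W = W'').card
        = Fintype.card K ^ (finrank K p * r) := by
    intro W'' hW''
    rw [Finset.mem_filter] at hW''
    have hle : p ≤ comap p.mkQ W'' := fun x hx => by
      simp only [Submodule.mem_comap, Submodule.mkQ_apply,
        (Submodule.Quotient.mk_eq_zero p).mpr hx, Submodule.zero_mem]
    have hpred : ∀ W : Submodule K V,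
        ((finrank K W = r ∧ W ⊓ p = ⊥) ∧ map p.mkQ W = W'')
          ↔ (W ⊓ p = ⊥ ∧ p ⊔ W = comap p.mkQ W'') := by
      intro W
      constructor
      · rintro ⟨⟨_, h2⟩, h3⟩
        exact ⟨h2, by rw [← h3, Submodule.comap_map_mkQ]⟩
      · rintro ⟨h1, h2⟩
        have hmap : map p.mkQ W = W'' := by
          have hh : map p.mkQ (p ⊔ W) = W'' := by
            rw [h2, Submodule.map_comap_eq, Submodule.range_mkQ, top_inf_eq]
          rwa [Submodule.map_sup, hmkp, bot_sup_eq] at hh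
        have h4 := Submodule.finrank_sup_add_finrank_inf_eq p W
        have h5 : p ⊓ W = ⊥ := by rw [inf_comm]; exact h1
        have h6 := finrank_comap_mkQ p W''
        rw [h2, h5, finrank_bot, h6, hW''.2] at h4
        exact ⟨⟨by omega, h1⟩, hmap⟩
    rw [Finset.filter_filter, Finset.filter_congr (fun W _ => hpred W)]
    have := card_relCompl (K := K) hle
    rw [Nat.card_eq_fintype_card, Fintype.card_subtype] at this
    rw [this]
    congr 1
    have h6 := finrank_comap_mkQ p W''
    rw [hW''.2] at h6
    rw [h6]
    rw [Nat.add_sub_cancel, mul_comm]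
  rw [Finset.sum_congr rfl hterm, Finset.sum_const, smul_eq_mul]
  congr 1
  rw [← h, Nat.card_eq_fintype_card, Fintype.card_subtype]

private theorem card_rank_zero :
    Nat.card {W : Submodule K V // finrank K W = 0} = 1 := by
  rw [Nat.card_eq_one_iff_unique]
  constructor
  · constructor
    intro W₁ W₂
    apply Subtype.ext
    rw [Submodule.finrank_eq_zero.mp W₁.2, Submodule.finrank_eq_zero.mp W₂.2]
  · exact ⟨⟨⊥, finrank_bot K V⟩⟩

private theorem line_disjoint {p W : Submodule K V} (hp : finrank K p = 1) :
    ¬ p ≤ W ↔ W ⊓ p = ⊥ := by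
  constructor
  · intro hW
    by_contra hne
    have h1 : W ⊓ p ≤ p := inf_le_right
    have h2 : finrank K (W ⊓ p : Submodule K V) ≠ 0 := by
      rw [Ne, Submodule.finrank_eq_zero]; exact hne
    have h3 : finrank K (W ⊓ p : Submodule K V) ≤ 1 := by
      rw [← hp]; exact Submodule.finrank_mono h1
    have h4 : W ⊓ p = p := Submodule.eq_of_le_of_finrank_le h1 (by omega)
    exact hW (by rw [← h4]; exact inf_le_left)
  · intro hW hle
    have : p = W ⊓ p := le_antisymm (le_inf hle le_rfl) inf_le_right
    rw [hW] at this
    rw [this, finrank_bot] at hp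
    omega

private theorem count_subspaces (d : ℕ) : ∀ (j : ℕ) (V : Type) [AddCommGroup V] [Module K V]
    [FiniteDimensional K V], finrank K V = d →
    Nat.card {W : Submodule K V // finrank K W = j} = gbinom (Fintype.card K) d j := by
  induction d with
  | zero =>
    intro j V _ _ _ hV
    match j with
    | 0 => exact card_rank_zero
    | j+1 =>
      rw [show gbinom (Fintype.card K) 0 (j+1) = 0 from rfl, Nat.card_eq_zero]
      left
      rw [isEmpty_subtype]
      intro W hW
      have := Submodule.finrank_le W
      omega
  | succ d ih =>
    intro j V _ _ _ hV
    match j with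
    | 0 => exact card_rank_zero
    | j+1 =>
      have hpos : 0 < finrank K V := by omega
      have : Nontrivial V := Module.finrank_pos_iff.mp hpos
      obtain ⟨x, hx⟩ := exists_ne (0 : V)
      set p : Submodule K V := K ∙ x with hpdef
      have hp : finrank K p = 1 := finrank_span_singleton hx
      have hquot : finrank K (V ⧸ p) = d := by
        have := Submodule.finrank_quotient_add_finrank p
        omega
      have : Finite (Submodule K V) := finiteSub
      rw [nat_card_split (fun W : Submodule K V => finrank K W = j + 1) (fun W => p ≤ W)]
      have hA : Nat.card {W : Submodule K V // finrank K W = j + 1 ∧ p ≤ W}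
          = gbinom (Fintype.card K) d j := by
        calc Nat.card {W : Submodule K V // finrank K W = j + 1 ∧ p ≤ W}
            = Nat.card {W : Submodule K V //
              p ≤ W ∧ finrank K W = finrank K p + j ∧ True} :=
              Nat.card_congr (Equiv.subtypeEquivRight
                (fun W => by rw [hp]; constructor
                             · rintro ⟨h1, h2⟩; exact ⟨h2, by omega, trivial⟩
                             · rintro ⟨h1, h2, _⟩; exact ⟨by omega, h1⟩))
          _ = Nat.card {W'' : Submodule K (V ⧸ p) // finrank K W'' = j ∧ True} :=
              card_contain p j (fun _ => True)
          _ = Nat.card {W'' : Submodule K (V ⧸ p) // finrank K W'' = j} :=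
              Nat.card_congr (Equiv.subtypeEquivRight (fun W'' => by simp))
          _ = gbinom (Fintype.card K) d j := ih j (V ⧸ p) hquot
      have hB : Nat.card {W : Submodule K V // finrank K W = j + 1 ∧ ¬ p ≤ W}
          = gbinom (Fintype.card K) d (j+1) * Fintype.card K ^ (j+1) := by
        rw [Nat.card_congr (Equiv.subtypeEquivRight (q := fun W : Submodule K V =>
          finrank K W = j + 1 ∧ W ⊓ p = ⊥)
          (fun W => and_congr_right fun _ => line_disjoint hp))]
        rw [card_disjoint p (j+1) _ (ih (j+1) (V ⧸ p) hquot), hp, one_mul]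
      rw [hA, hB,
        show gbinom (Fintype.card K) (d+1) (j+1)
          = gbinom (Fintype.card K) d j
            + Fintype.card K ^ (j+1) * gbinom (Fintype.card K) d (j+1) from rfl]
      ring

end Counting3
section Counting4

open Submodule Module

variable {K : Type} [Field K] [Fintype K]
variable {V : Type} [AddCommGroup V] [Module K V] [FiniteDimensional K V]

private theorem count_through {n k : ℕ} (hV : finrank K V = n + 1)
    {p : Submodule K V} (hp : finrank K p = 1) :
    Nat.card {W : Submodule K V // finrank K W = k + 1 ∧ p ≤ W}
      = gbinom (Fintype.card K) n k := by
  have hquot : finrank K (V ⧸ p) = n := by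
    have := Submodule.finrank_quotient_add_finrank p
    omega
  calc Nat.card {W : Submodule K V // finrank K W = k + 1 ∧ p ≤ W}
      = Nat.card {W : Submodule K V // p ≤ W ∧ finrank K W = finrank K p + k ∧ True} :=
        Nat.card_congr (Equiv.subtypeEquivRight
          (fun W => by rw [hp]; constructor
                       · rintro ⟨h1, h2⟩; exact ⟨h2, by omega, trivial⟩
                       · rintro ⟨h1, h2, _⟩; exact ⟨by omega, h1⟩))
    _ = Nat.card {W'' : Submodule K (V ⧸ p) // finrank K W'' = k ∧ True} :=
        card_contain p k (fun _ => True)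
    _ = Nat.card {W'' : Submodule K (V ⧸ p) // finrank K W'' = k} :=
        Nat.card_congr (Equiv.subtypeEquivRight (fun W'' => by simp))
    _ = gbinom (Fintype.card K) n k := count_subspaces n k (V ⧸ p) hquot

private theorem count_through_in {k : ℕ} {p π : Submodule K V}
    (hp : finrank K p = 1) (hle : p ≤ π) :
    Nat.card {W : Submodule K V // finrank K W = k + 1 ∧ p ≤ W ∧ W ⊓ π = ⊥} = 0 := by
  rw [Nat.card_eq_zero]
  left
  rw [isEmpty_subtype]
  rintro W ⟨_, hW2, hW3⟩
  have : p ≤ W ⊓ π := le_inf hW2 hle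
  rw [hW3, le_bot_iff] at this
  rw [this, finrank_bot] at hp
  omega

private theorem count_through_disjoint {n k : ℕ} (hn : 2*k + 1 ≤ n)
    (hV : finrank K V = n + 1) {p π : Submodule K V}
    (hp : finrank K p = 1) (hπ : finrank K π = k + 1) (hdisj : p ⊓ π = ⊥) :
    Nat.card {W : Submodule K V // finrank K W = k + 1 ∧ p ≤ W ∧ W ⊓ π = ⊥}
      = gbinom (Fintype.card K) (n - k - 1) k * Fintype.card K ^ (k^2 + k) := by
  have hquot : finrank K (V ⧸ p) = n := by
    have := Submodule.finrank_quotient_add_finrank p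
    omega
  have hπp : π ⊓ p = ⊥ := by rw [inf_comm]; exact hdisj
  set π' : Submodule K (V ⧸ p) := map p.mkQ π with hπ'def
  have hπ' : finrank K π' = k + 1 := by rw [hπ'def, finrank_map_mkQ p hπp, hπ]
  have hquot2 : finrank K ((V ⧸ p) ⧸ π') = n - k - 1 := by
    have := Submodule.finrank_quotient_add_finrank π'
    omega
  have key : ∀ W : Submodule K V, p ≤ W → (W ⊓ π = ⊥ ↔ map p.mkQ W ⊓ π' = ⊥) := by
    intro W hpW
    constructor
    · intro h
      rw [eq_bot_iff]
      rintro u ⟨hu1, hu2⟩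
      obtain ⟨w, hw, rfl⟩ := Submodule.mem_map.mp hu1
      obtain ⟨y, hy, hyw⟩ := Submodule.mem_map.mp hu2
      have hwy : y - w ∈ p := by
        rw [← Submodule.Quotient.eq p]
        exact hyw
      have hyW : y ∈ W := by
        have : y - w ∈ W := hpW hwy
        simpa using add_mem this hw
      have hy0 : y ∈ W ⊓ π := ⟨hyW, hy⟩
      rw [h] at hy0
      rw [Submodule.mem_bot] at hy0
      rw [hy0] at hyw
      simp only [Submodule.mem_bot, ← hyw]
      simp
    · intro h
      rw [eq_bot_iff]
      rintro v ⟨hv1, hv2⟩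
      have hmem : p.mkQ v ∈ map p.mkQ W ⊓ π' :=
        ⟨Submodule.mem_map_of_mem hv1, Submodule.mem_map_of_mem hv2⟩
      rw [h, Submodule.mem_bot, Submodule.mkQ_apply,
        Submodule.Quotient.mk_eq_zero] at hmem
      have : v ∈ p ⊓ π := ⟨hmem, hv2⟩
      rw [hdisj] at this
      exact this
  calc Nat.card {W : Submodule K V // finrank K W = k + 1 ∧ p ≤ W ∧ W ⊓ π = ⊥}
      = Nat.card {W : Submodule K V //
          p ≤ W ∧ finrank K W = finrank K p + k ∧ map p.mkQ W ⊓ π' = ⊥} :=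
        Nat.card_congr (Equiv.subtypeEquivRight
          (fun W => by
            rw [hp]
            constructor
            · rintro ⟨h1, h2, h3⟩; exact ⟨h2, by omega, (key W h2).mp h3⟩
            · rintro ⟨h1, h2, h3⟩; exact ⟨by omega, h1, (key W h1).mpr h3⟩))
    _ = Nat.card {W'' : Submodule K (V ⧸ p) // finrank K W'' = k ∧ W'' ⊓ π' = ⊥} :=
        card_contain p k (fun W'' => W'' ⊓ π' = ⊥)
    _ = gbinom (Fintype.card K) (n - k - 1) k * Fintype.card K ^ (finrank K π' * k) :=
        card_disjoint π' k _ (count_subspaces (n - k - 1) k ((V ⧸ p) ⧸ π') hquot2)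
    _ = gbinom (Fintype.card K) (n - k - 1) k * Fintype.card K ^ (k^2 + k) := by
        rw [hπ', show (k+1) * k = k^2 + k by ring]

end Counting4

private theorem gbinom_pos {q : ℕ} (hq : 1 ≤ q) : ∀ {a b : ℕ}, b ≤ a → 0 < gbinom q a b := by
  intro a
  induction a with
  | zero => intro b hb; interval_cases b; exact Nat.one_pos
  | succ a ih =>
    intro b hb
    match b with
    | 0 => exact Nat.one_pos
    | b+1 =>
      have h1 : 0 < gbinom q a b := ih (by omega)
      show 0 < gbinom q a b + q^(b+1) * gbinom q a (b+1)
      omega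

/-- If the characteristic vector of a set $\mathcal L$ of $k$-subspaces of
$\mathrm{PG}(n,q)$ lies in the row space $(\ker A)^\perp$ of the point–$k$-space
incidence matrix $A$, then for every $k$-subspace $\pi$ the number of elements of
$\mathcal L$ disjoint from $\pi$ equals $(x-\chi(\pi))\binom{n-k-1}{k}_q q^{k^2+k}$. -/
theorem stmt4 (q n k : ℕ) (F : Type) [Field F] [Fintype F]
    (hq : Fintype.card F = q) (hn : 2*k + 1 ≤ n)
    [Fintype {W : Submodule F (Fin (n+1) → F) // Module.finrank F W = k + 1}]
    (L : Finset {W : Submodule F (Fin (n+1) → F) // Module.finrank F W = k + 1})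
    (x : ℝ) (hx : (L.card : ℝ) = x * gbinom q n k)
    (hker : ∀ v : {W : Submodule F (Fin (n+1) → F) // Module.finrank F W = k + 1} → ℝ,
      (∀ p : {P : Submodule F (Fin (n+1) → F) // Module.finrank F P = 1},
        ∑ W : {W : Submodule F (Fin (n+1) → F) // Module.finrank F W = k + 1},
          (if p.1 ≤ W.1 then v W else 0) = 0) →
      ∑ W ∈ L, v W = 0)
    (π : {W : Submodule F (Fin (n+1) → F) // Module.finrank F W = k + 1}) :
    (((L.filter fun W => W.1 ⊓ π.1 = ⊥).card : ℝ))
      = (x - (if π ∈ L then 1 else 0)) * (gbinom q (n - k - 1) k * (q : ℝ)^(k^2 + k)) := by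
  subst hq
  set q := Fintype.card F with hqdef
  have hV : Module.finrank F (Fin (n+1) → F) = n + 1 := Module.finrank_fin_fun F
  set N : ℕ := gbinom q n k with hNdef
  set D : ℕ := gbinom q (n - k - 1) k * q ^ (k^2 + k) with hDdef
  have hq1 : 1 ≤ q := Fintype.card_pos
  have hN0 : (N : ℝ) ≠ 0 := by
    have : 0 < N := gbinom_pos hq1 (by omega)
    positivity
  set v : {W : Submodule F (Fin (n+1) → F) // Module.finrank F W = k + 1} → ℝ := fun W =>
    (N : ℝ) * (if W.1 ⊓ π.1 = ⊥ then 1 else 0) - (D : ℝ)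
      + (if W = π then (if True then ((D : ℝ) * N) else 0) else 0) with hvdef
  -- the vector v is orthogonal to all rows of the incidence matrix
  have hrows : ∀ p : {P : Submodule F (Fin (n+1) → F) // Module.finrank F P = 1},
      ∑ W : {W : Submodule F (Fin (n+1) → F) // Module.finrank F W = k + 1}, (if p.1 ≤ W.1 then v W else 0) = 0 := by
    intro p
    have hsplit : ∀ W : {W : Submodule F (Fin (n+1) → F) // Module.finrank F W = k + 1}, (if p.1 ≤ W.1 then v W else 0)
        = (N : ℝ) * (if p.1 ≤ W.1 ∧ W.1 ⊓ π.1 = ⊥ then 1 else 0)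
          - (D : ℝ) * (if p.1 ≤ W.1 then 1 else 0)
          + (if W = π then (if p.1 ≤ π.1 then ((D : ℝ) * N) else 0) else 0) := by
      intro W
      rw [hvdef]
      by_cases h3 : W = π
      · subst h3
        by_cases h1 : p.1 ≤ W.1 <;> by_cases h2 : W.1 ⊓ W.1 = ⊥ <;>
          simp [h1, h2] <;> ring
      · by_cases h1 : p.1 ≤ W.1 <;> by_cases h2 : W.1 ⊓ π.1 = ⊥ <;>
          simp [h1, h2, h3] <;> ring
    rw [Finset.sum_congr rfl (fun W _ => hsplit W), Finset.sum_add_distrib,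
      Finset.sum_sub_distrib, ← Finset.mul_sum, ← Finset.mul_sum,
      Finset.sum_ite_eq' Finset.univ π]
    simp only [Finset.mem_univ, if_true]
    -- identify the two counting sums
    have hc2 : ∑ W : {W : Submodule F (Fin (n+1) → F) // Module.finrank F W = k + 1}, (if p.1 ≤ W.1 then (1:ℝ) else 0) = (N : ℝ) := by
      rw [Finset.sum_boole]
      norm_cast
      rw [← Fintype.card_subtype, ← Nat.card_eq_fintype_card, hNdef]
      rw [Nat.card_congr (Equiv.subtypeSubtypeEquivSubtypeInter
        (fun W : Submodule F (Fin (n+1) → F) => Module.finrank F W = k + 1) (fun W => p.1 ≤ W))]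
      exact count_through hV p.2
    have hc1 : ∑ W : {W : Submodule F (Fin (n+1) → F) // Module.finrank F W = k + 1}, (if p.1 ≤ W.1 ∧ W.1 ⊓ π.1 = ⊥ then (1:ℝ) else 0)
        = if p.1 ≤ π.1 then 0 else (D : ℝ) := by
      rw [Finset.sum_boole]
      norm_cast
      rw [← Fintype.card_subtype, ← Nat.card_eq_fintype_card]
      rw [Nat.card_congr (Equiv.subtypeSubtypeEquivSubtypeInter
        (fun W : Submodule F (Fin (n+1) → F) => Module.finrank F W = k + 1)
        (fun W => p.1 ≤ W ∧ W ⊓ π.1 = ⊥))]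
      have := Nat.card_congr (Equiv.subtypeEquivRight
        (p := fun W : Submodule F (Fin (n+1) → F) => Module.finrank F W = k + 1 ∧ p.1 ≤ W ∧ W ⊓ π.1 = ⊥)
        (q := fun W : Submodule F (Fin (n+1) → F) => Module.finrank F W = k + 1 ∧ (p.1 ≤ W ∧ W ⊓ π.1 = ⊥))
        (fun W => by tauto))
      rw [← this]
      by_cases hpπ : p.1 ≤ π.1
      · rw [if_pos hpπ, count_through_in p.2 hpπ]
      · rw [if_neg hpπ, hDdef]
        have hdisj : p.1 ⊓ π.1 = ⊥ := by
          rw [inf_comm]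
          exact (line_disjoint p.2).mp hpπ
        exact_mod_cast count_through_disjoint hn hV p.2 π.2 hdisj
    rw [hc1, hc2]
    by_cases hpπ : p.1 ≤ π.1 <;> simp [hpπ] <;> ring
  have hsum := hker v hrows
  -- evaluate the sum over L
  have hL : ∑ W ∈ L, v W
      = (N : ℝ) * ((L.filter fun W => W.1 ⊓ π.1 = ⊥).card : ℝ)
        - (D : ℝ) * (L.card : ℝ) + (D : ℝ) * N * (if π ∈ L then 1 else 0) := by
    rw [hvdef]
    simp only []
    rw [Finset.sum_add_distrib, Finset.sum_sub_distrib, ← Finset.mul_sum,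
      Finset.sum_boole, Finset.sum_const, Finset.sum_ite_eq' L π]
    simp only [if_true]
    push_cast
    ring_nf
    by_cases hπL : π ∈ L <;> simp [hπL] <;> ring
  rw [hL, hx] at hsum
  have hgoal : (N : ℝ) * ((L.filter fun W => W.1 ⊓ π.1 = ⊥).card : ℝ)
      = (N : ℝ) * ((x - (if π ∈ L then 1 else 0)) * (D : ℝ)) := by
    linear_combination hsum
  have := mul_left_cancel₀ hN0 hgoal
  rw [this, hDdef]
  push_cast
  ring
end

section
/- Let $\mathcal{L}$ be a set of $k$-subspaces of $\mathrm{PG}(n,q)$ ($n \geq 2k+1$) whose characteristic vector $\chi$ lies in $(\ker A)^{\perp}$, where $A$ is the point–$k$-space incidence matrix, and set $x = |\mathcal{L}|/\binom{n}{k}_q$. If $\mathcal{S}$ is a $k$-spread of $\mathrm{PG}(n,q)$, then $|\mathcal{L} \cap \mathcal{S}| = x$. -/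
open Finset
open scoped Classical

section Aux

lemma gbinom_zero_right (q m : ℕ) : gbinom q m 0 = 1 := by cases m <;> rfl

lemma gbinom_succ_succ (q a b : ℕ) :
    gbinom q (a+1) (b+1) = gbinom q a b + q^(b+1) * gbinom q a (b+1) := rfl

lemma gbinom_zero_succ (q b : ℕ) : gbinom q 0 (b+1) = 0 := rfl

/-- Key identity: `gbinom q m j * ∏_{i<j} (q^j - q^i) = ∏_{i<j} (q^m - q^i)`. -/
lemma gbinom_mul_prod (q : ℕ) (hq : 1 ≤ q) : ∀ m j : ℕ,
    gbinom q m j * ∏ i ∈ range j, (q^j - q^i) = ∏ i ∈ range j, (q^m - q^i) := by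
  intro m
  induction m with
  | zero =>
    intro j
    cases j with
    | zero => simp [gbinom_zero_right]
    | succ b =>
      rw [gbinom_zero_succ, zero_mul]
      refine (Finset.prod_eq_zero (Finset.mem_range.2 (Nat.succ_pos b)) ?_).symm
      simp
  | succ m ih =>
    intro j
    cases j with
    | zero => simp [gbinom_zero_right]
    | succ b =>
      have hA : ∏ i ∈ range (b+1), (q^(b+1) - q^i)
          = (q^(b+1) - 1) * (q^b * ∏ i ∈ range b, (q^b - q^i)) := by
        rw [Finset.prod_range_succ' (fun i => q^(b+1) - q^i)]
        have : ∀ i, q^(b+1) - q^(i+1) = q * (q^b - q^i) := by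
          intro i; rw [Nat.mul_sub]; ring_nf
        simp_rw [this]
        rw [Finset.prod_mul_distrib, Finset.prod_const, card_range, pow_zero]
        ring
      have hB : ∏ i ∈ range (b+1), (q^(m+1) - q^i)
          = (q^(m+1) - 1) * (q^b * ∏ i ∈ range b, (q^m - q^i)) := by
        rw [Finset.prod_range_succ' (fun i => q^(m+1) - q^i)]
        have : ∀ i, q^(m+1) - q^(i+1) = q * (q^m - q^i) := by
          intro i; rw [Nat.mul_sub]; ring_nf
        simp_rw [this]
        rw [Finset.prod_mul_distrib, Finset.prod_const, card_range, pow_zero]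
        ring
      have h1 := ih b
      have h2 : gbinom q m (b+1) * ((q^(b+1) - 1) * (q^b * ∏ i ∈ range b, (q^b - q^i)))
          = (∏ i ∈ range b, (q^m - q^i)) * (q^m - q^b) := by
        rw [← hA, ih (b+1), Finset.prod_range_succ]
      rw [gbinom_succ_succ, hA, hB]
      rcases le_or_gt b m with hbm | hbm
      · have key : (q^(b+1) - 1) * q^b + q^(b+1) * (q^m - q^b) = (q^(m+1) - 1) * q^b := by
          have e1 : 1 ≤ q^(b+1) := Nat.one_le_pow _ _ hq
          have e2 : q^b ≤ q^m := Nat.pow_le_pow_right hq hbm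
          have e3 : 1 ≤ q^(m+1) := Nat.one_le_pow _ _ hq
          zify [e1, e2, e3]
          have f1 : (q:ℤ)^(m+1) = q * q^m := by ring
          have f2 : (q:ℤ)^(b+1) = q * q^b := by ring
          rw [f1, f2]; ring
        calc (gbinom q m b + q^(b+1) * gbinom q m (b+1)) * ((q^(b+1) - 1) * (q^b * ∏ i ∈ range b, (q^b - q^i)))
            = (gbinom q m b * ∏ i ∈ range b, (q^b - q^i)) * ((q^(b+1) - 1) * q^b)
              + q^(b+1) * ((gbinom q m (b+1) * ((q^(b+1)-1) * (q^b * ∏ i ∈ range b, (q^b - q^i))))) := by ring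
          _ = (∏ i ∈ range b, (q^m - q^i)) * ((q^(b+1) - 1) * q^b)
              + q^(b+1) * ((∏ i ∈ range b, (q^m - q^i)) * (q^m - q^b)) := by
              rw [h1]
              congr 1
              rw [h2]
          _ = (∏ i ∈ range b, (q^m - q^i)) * ((q^(b+1) - 1) * q^b + q^(b+1) * (q^m - q^b)) := by ring
          _ = (q^(m+1) - 1) * (q^b * ∏ i ∈ range b, (q^m - q^i)) := by rw [key]; ring
      · have hz : ∏ i ∈ range b, (q^m - q^i) = 0 :=
          Finset.prod_eq_zero (Finset.mem_range.2 hbm) (by simp)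
        have hz2 : gbinom q m b * ∏ i ∈ range b, (q^b - q^i) = 0 := by rw [ih b, hz]
        have hz3 : gbinom q m (b+1) * ((q^(b+1)-1) * (q^b * ∏ i ∈ range b, (q^b - q^i))) = 0 := by
          rw [h2, hz, zero_mul]
        calc (gbinom q m b + q^(b+1) * gbinom q m (b+1)) * ((q^(b+1) - 1) * (q^b * ∏ i ∈ range b, (q^b - q^i)))
            = (gbinom q m b * ∏ i ∈ range b, (q^b - q^i)) * ((q^(b+1) - 1) * q^b)
              + q^(b+1) * (gbinom q m (b+1) * ((q^(b+1)-1) * (q^b * ∏ i ∈ range b, (q^b - q^i)))) := by ring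
          _ = 0 := by rw [hz2, hz3]; ring
          _ = (q^(m+1) - 1) * (q^b * ∏ i ∈ range b, (q^m - q^i)) := by rw [hz]; ring

lemma gbinom_pos_s6 (q : ℕ) (hq : 1 < q) (m j : ℕ) (hjm : j ≤ m) : 0 < gbinom q m j := by
  have h := gbinom_mul_prod q (le_of_lt hq) m j
  have hB : 0 < ∏ i ∈ range j, (q ^ m - q ^ i) := by
    apply Finset.prod_pos
    intro i hi
    have : q ^ i < q ^ m := Nat.pow_lt_pow_right hq (lt_of_lt_of_le (Finset.mem_range.mp hi) hjm)
    omega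
  rw [← h] at hB
  exact Nat.pos_of_mul_pos_left (by rwa [mul_comm] at hB)

variable {F : Type} [Field F] [Fintype F]

/-- The number of linearly independent `j`-tuples in a finite vector space. -/
lemma card_li (V : Type) [AddCommGroup V] [Module F V] [Fintype V] (j : ℕ) :
    Fintype.card {f : Fin j → V // LinearIndependent F f} =
      ∏ i ∈ range j, (Fintype.card F ^ Module.finrank F V - Fintype.card F ^ i) := by
  induction j with
  | zero =>
    haveI : Unique {f : Fin 0 → V // LinearIndependent F f} :=
      ⟨⟨⟨fun i => 0, linearIndependent_empty_type⟩⟩,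
        fun a => Subtype.ext (Subsingleton.elim _ _)⟩
    simp
  | succ j ih =>
    rw [Fintype.card_congr (equiv_linearIndependent j), Fintype.card_sigma]
    have hfib : ∀ s : {s : Fin j → V // LinearIndependent F s},
        Fintype.card ((↑(Submodule.span F (Set.range (s : Fin j → V))))ᶜ : Set V)
          = Fintype.card F ^ Module.finrank F V - Fintype.card F ^ j := by
      intro s
      rw [Fintype.card_compl_set, ← Module.card_eq_pow_finrank (K := F) (V := V)]
      congr 1
      have : Fintype.card (↑(Submodule.span F (Set.range (s : Fin j → V))) : Set V)
          = Fintype.card F ^ Module.finrank F (Submodule.span F (Set.range (s : Fin j → V))) :=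
        Module.card_eq_pow_finrank (K := F)
      rw [this, finrank_span_eq_card s.2, Fintype.card_fin]
    simp_rw [hfib]
    rw [Finset.sum_const, card_univ, ih, Finset.prod_range_succ]
    rw [smul_eq_mul, mul_comm]

noncomputable instance fintypeSubmodule (V : Type) [AddCommGroup V] [Module F V] [Fintype V] :
    Fintype (Submodule F V) :=
  Fintype.ofInjective (fun W => (W : Set V)) (SetLike.coe_injective)

/-- Fiber of the span map over a `j`-dimensional subspace `W` is equivalent to
linearly independent `j`-tuples in `W`. -/
noncomputable def fiberEquiv (V : Type) [AddCommGroup V] [Module F V] [FiniteDimensional F V]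
    (j : ℕ) (W : Submodule F V) (hW : Module.finrank F W = j) :
    {f : {f : Fin j → V // LinearIndependent F f} //
        Submodule.span F (Set.range f.1) = W} ≃ {g : Fin j → W // LinearIndependent F g} where
  toFun f := ⟨fun i => ⟨f.1.1 i, by
      have h : Submodule.span F (Set.range f.1.1) ≤ W := le_of_eq f.2
      exact h (Submodule.subset_span ⟨i, rfl⟩)⟩, by
    apply LinearIndependent.of_comp W.subtype
    exact f.1.2⟩
  invFun g := ⟨⟨fun i => (g.1 i : V), by
      have := g.2.map' W.subtype W.ker_subtype
      exact this⟩, by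
    have hsp : Submodule.span F (Set.range g.1) = ⊤ := by
      rcases isEmpty_or_nonempty (Fin j) with hj | hj
      · haveI : Subsingleton W := by
          rw [← Module.finrank_zero_iff (R := F)]
          rw [hW, ← Fintype.card_fin j]
          exact (Fintype.card_eq_zero_iff.mpr hj).symm ▸ rfl
        exact Subsingleton.elim _ _
      · exact g.2.span_eq_top_of_card_eq_finrank (by simp [hW])
    have : Set.range (fun i => (g.1 i : V)) = W.subtype '' Set.range g.1 := by
      rw [← Set.range_comp]; rfl
    rw [this, ← Submodule.map_span, hsp, Submodule.map_subtype_top]⟩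
  left_inv f := by
    apply Subtype.ext; apply Subtype.ext; rfl
  right_inv g := by
    apply Subtype.ext; rfl

lemma card_subspaces_mul (V : Type) [AddCommGroup V] [Module F V] [Fintype V] (j : ℕ) :
    Fintype.card {W : Submodule F V // Module.finrank F W = j} *
      ∏ i ∈ range j, (Fintype.card F ^ j - Fintype.card F ^ i) =
    ∏ i ∈ range j, (Fintype.card F ^ Module.finrank F V - Fintype.card F ^ i) := by
  classical
  rw [← card_li (F := F) V j]
  let φ : {f : Fin j → V // LinearIndependent F f} →
      {W : Submodule F V // Module.finrank F W = j} :=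
    fun f => ⟨Submodule.span F (Set.range f.1), by
      rw [finrank_span_eq_card f.2, Fintype.card_fin]⟩
  rw [Fintype.card_congr (Equiv.sigmaFiberEquiv φ).symm, Fintype.card_sigma]
  have hfib : ∀ W : {W : Submodule F V // Module.finrank F W = j},
      Fintype.card {f // φ f = W} = ∏ i ∈ range j, (Fintype.card F ^ j - Fintype.card F ^ i) := by
    intro W
    have e1 : {f // φ f = W} ≃ {f : {f : Fin j → V // LinearIndependent F f} //
        Submodule.span F (Set.range f.1) = W.1} :=
      Equiv.subtypeEquivRight (fun f => by
        constructor
        · intro h; rw [← h]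
        · intro h; apply Subtype.ext; exact h)
    rw [Fintype.card_congr (e1.trans (fiberEquiv V j W.1 W.2))]
    rw [card_li (F := F) W.1 j, W.2]
  simp_rw [hfib]
  rw [Finset.sum_const, card_univ, smul_eq_mul]

lemma card_subspaces (V : Type) [AddCommGroup V] [Module F V] [Fintype V] (j : ℕ) :
    Fintype.card {W : Submodule F V // Module.finrank F W = j} =
      gbinom (Fintype.card F) (Module.finrank F V) j := by
  set q := Fintype.card F with hq
  have hq2 : 1 < q := Fintype.one_lt_card
  have hA : 0 < ∏ i ∈ range j, (q ^ j - q ^ i) := by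
    apply Finset.prod_pos
    intro i hi
    have := Nat.pow_lt_pow_right hq2 (Finset.mem_range.mp hi)
    omega
  apply Nat.eq_of_mul_eq_mul_right hA
  rw [card_subspaces_mul, gbinom_mul_prod q (le_of_lt hq2)]

omit [Fintype F] in
/-- finrank of `comap mkQ U` is `finrank U + finrank p`. -/
lemma finrank_comap_mkQ_s6 (V : Type) [AddCommGroup V] [Module F V] [FiniteDimensional F V]
    (p : Submodule F V) (U : Submodule F (V ⧸ p)) :
    Module.finrank F (Submodule.comap p.mkQ U) =
      Module.finrank F U + Module.finrank F p := by
  set W := Submodule.comap p.mkQ U with hWdef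
  have hpW : p ≤ W := by
    intro x hx
    show p.mkQ x ∈ U
    have hx0 : p.mkQ x = 0 := (Submodule.Quotient.mk_eq_zero p).2 hx
    rw [hx0]; exact U.zero_mem
  have hrange : LinearMap.range (p.mkQ.domRestrict W) = U := by
    rw [LinearMap.range_domRestrict]
    exact Submodule.map_comap_eq_self (by rw [Submodule.range_mkQ]; exact le_top)
  have hker : LinearMap.ker (p.mkQ.domRestrict W) = Submodule.comap W.subtype p := by
    ext x
    simp [LinearMap.domRestrict, Submodule.mem_comap, Submodule.Quotient.mk_eq_zero]
  have h := LinearMap.finrank_range_add_finrank_ker (p.mkQ.domRestrict W)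
  rw [hrange, hker] at h
  rw [← h, (Submodule.comapSubtypeEquivOfLe hpW).finrank_eq]

lemma card_contains (V : Type) [AddCommGroup V] [Module F V] [Fintype V]
    (p : Submodule F V) (hp : Module.finrank F p = 1) (k : ℕ) :
    Fintype.card {W : Submodule F V // p ≤ W ∧ Module.finrank F W = k + 1} =
      gbinom (Fintype.card F) (Module.finrank F V - 1) k := by
  haveI : Finite (V ⧸ p) := Quotient.finite _
  letI : Fintype (V ⧸ p) := Fintype.ofFinite _
  have e1 : {U : Submodule F (V ⧸ p) // Module.finrank F U = k} ≃
      {W' : {W : Submodule F V // p ≤ W} // Module.finrank F W'.1 = k + 1} :=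
    Equiv.subtypeEquiv (Submodule.comapMkQRelIso p).toEquiv (fun U => by
      have h := finrank_comap_mkQ_s6 (F := F) V p U
      rw [hp] at h
      show _ ↔ Module.finrank F (Submodule.comap p.mkQ U) = k + 1
      rw [h]
      omega)
  have e2 : {W' : {W : Submodule F V // p ≤ W} // Module.finrank F W'.1 = k + 1} ≃
      {W : Submodule F V // p ≤ W ∧ Module.finrank F W = k + 1} :=
    Equiv.subtypeSubtypeEquivSubtypeInter (fun W : Submodule F V => p ≤ W)
      (fun W : Submodule F V => Module.finrank F W = k + 1)
  rw [← Fintype.card_congr (e1.trans e2), card_subspaces]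
  congr 1
  have := Submodule.finrank_quotient_add_finrank p
  rw [hp] at this
  omega

end Aux

/-- If the characteristic vector of $\mathcal L$ lies in $(\ker A)^\perp$ and
$\mathcal S$ is a $k$-spread of $\mathrm{PG}(n,q)$, then $|\mathcal L \cap \mathcal S| = x$. -/
theorem stmt6 (q n k : ℕ) (F : Type) [Field F] [Fintype F]
    (hq : Fintype.card F = q) (hn : 2*k + 1 ≤ n)
    [Fintype {W : Submodule F (Fin (n+1) → F) // Module.finrank F W = k + 1}]
    (L : Finset {W : Submodule F (Fin (n+1) → F) // Module.finrank F W = k + 1})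
    (x : ℝ) (hx : (L.card : ℝ) = x * gbinom q n k)
    (hker : ∀ v : {W : Submodule F (Fin (n+1) → F) // Module.finrank F W = k + 1} → ℝ,
      (∀ p : {P : Submodule F (Fin (n+1) → F) // Module.finrank F P = 1},
        ∑ W : {W : Submodule F (Fin (n+1) → F) // Module.finrank F W = k + 1},
          (if p.1 ≤ W.1 then v W else 0) = 0) →
      ∑ W ∈ L, v W = 0)
    (S : Finset {W : Submodule F (Fin (n+1) → F) // Module.finrank F W = k + 1})
    (hdisj : ∀ W ∈ S, ∀ W' ∈ S, W ≠ W' → W.1 ⊓ W'.1 = ⊥)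
    (hcover : ∀ v : Fin (n+1) → F, v ≠ 0 → ∃ W ∈ S, v ∈ W.1) :
    ((L ∩ S).card : ℝ) = x := by
  set V := Fin (n+1) → F with hV
  set N := gbinom q n k with hN
  have hq2 : 1 < q := hq ▸ Fintype.one_lt_card
  have hNpos : 0 < N := gbinom_pos_s6 q hq2 n k (by omega)
  have hNne : (N : ℝ) ≠ 0 := Nat.cast_ne_zero.mpr hNpos.ne'
  -- the number of (k+1)-subspaces containing a fixed point is N
  have hcount : ∀ p : {P : Submodule F V // Module.finrank F P = 1},
      Fintype.card {W : {W : Submodule F V // Module.finrank F W = k + 1} // p.1 ≤ W.1} = N := by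
    intro p
    have e : {W : {W : Submodule F V // Module.finrank F W = k + 1} // p.1 ≤ W.1} ≃
        {W : Submodule F V // p.1 ≤ W ∧ Module.finrank F W = k + 1} :=
      ((Equiv.subtypeSubtypeEquivSubtypeInter
        (fun W : Submodule F V => Module.finrank F W = k + 1)
        (fun W : Submodule F V => p.1 ≤ W)).trans
        (Equiv.subtypeEquivRight (fun W => and_comm)))
    rw [Fintype.card_congr e, card_contains V p.1 p.2 k, hq, hN]
    have hfr : Module.finrank F V = n + 1 := Module.finrank_fin_fun F
    rw [hfr]
    norm_num
  -- each point lies in a unique spread element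
  have huniq : ∀ p : {P : Submodule F V // Module.finrank F P = 1},
      ∃ W₀, (W₀ ∈ S ∧ p.1 ≤ W₀.1) ∧
        ∀ W', W' ∈ S ∧ p.1 ≤ W'.1 → W' = W₀ := by
    intro p
    have hpne : p.1 ≠ ⊥ := by
      intro h
      have := p.2
      rw [h, finrank_bot] at this
      omega
    obtain ⟨u, hu, hune⟩ := Submodule.exists_mem_ne_zero_of_ne_bot hpne
    obtain ⟨W₀, hW₀S, hW₀u⟩ := hcover u hune
    have hsp : Submodule.span F {u} = p.1 := by
      apply Submodule.eq_of_le_of_finrank_eq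
      · rw [Submodule.span_le, Set.singleton_subset_iff]; exact hu
      · rw [finrank_span_singleton hune, p.2]
    have hple : ∀ W', W' ∈ S → u ∈ W'.1 → p.1 ≤ W'.1 := by
      intro W' hW'S hW'u
      rw [← hsp, Submodule.span_le, Set.singleton_subset_iff]
      exact hW'u
    refine ⟨W₀, ⟨hW₀S, hple W₀ hW₀S hW₀u⟩, ?_⟩
    rintro W' ⟨hW'S, hW'le⟩
    by_contra hne
    have hinf := hdisj W' hW'S W₀ hW₀S hne
    have : p.1 ≤ ⊥ := by
      rw [← hinf]
      exact le_inf hW'le (hple W₀ hW₀S hW₀u)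
    exact hpne (le_bot_iff.mp this)
  -- apply the kernel hypothesis to χ_S - 1/N
  set v : {W : Submodule F V // Module.finrank F W = k + 1} → ℝ :=
    fun W => (if W ∈ S then (1:ℝ) else 0) - (N:ℝ)⁻¹ with hv
  have hcol : ∀ p : {P : Submodule F V // Module.finrank F P = 1},
      ∑ W : {W : Submodule F V // Module.finrank F W = k + 1},
        (if p.1 ≤ W.1 then v W else 0) = 0 := by
    intro p
    have hsplit : ∀ W : {W : Submodule F V // Module.finrank F W = k + 1},
        (if p.1 ≤ W.1 then v W else 0) =
          (if p.1 ≤ W.1 ∧ W ∈ S then (1:ℝ) else 0)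
            - (if p.1 ≤ W.1 then ((N:ℝ)⁻¹) else 0) := by
      intro W
      rw [hv]
      by_cases h1 : p.1 ≤ W.1 <;> by_cases h2 : W ∈ S <;> simp [h1, h2]
    rw [Finset.sum_congr rfl (fun W _ => hsplit W), Finset.sum_sub_distrib]
    have hfirst : ∑ W : {W : Submodule F V // Module.finrank F W = k + 1},
        (if p.1 ≤ W.1 ∧ W ∈ S then (1:ℝ) else 0) = 1 := by
      rw [Finset.sum_boole]
      obtain ⟨W₀, hW₀, hW₀uniq⟩ := huniq p
      have : Finset.univ.filter
          (fun W : {W : Submodule F V // Module.finrank F W = k + 1} =>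
            p.1 ≤ W.1 ∧ W ∈ S) = {W₀} := by
        ext W
        simp only [Finset.mem_filter, Finset.mem_univ, true_and, Finset.mem_singleton]
        constructor
        · rintro ⟨h1, h2⟩; exact hW₀uniq W ⟨h2, h1⟩
        · rintro rfl; exact ⟨hW₀.2, hW₀.1⟩
      rw [this]
      simp
    have hsecond : ∑ W : {W : Submodule F V // Module.finrank F W = k + 1},
        (if p.1 ≤ W.1 then ((N:ℝ)⁻¹) else 0) = 1 := by
      rw [← Finset.sum_filter, Finset.sum_const, nsmul_eq_mul]
      have : (Finset.univ.filter
          (fun W : {W : Submodule F V // Module.finrank F W = k + 1} => p.1 ≤ W.1)).card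
          = N := by
        rw [← Fintype.card_subtype]
        exact hcount p
      rw [this]
      exact mul_inv_cancel₀ hNne
    rw [hfirst, hsecond]
    ring
  have hsum := hker v hcol
  have hLS : ∑ W ∈ L, v W = ((L ∩ S).card : ℝ) - (L.card : ℝ) * (N:ℝ)⁻¹ := by
    rw [hv, Finset.sum_sub_distrib]
    congr 1
    · rw [Finset.sum_boole, Finset.filter_mem_eq_inter]
    · rw [Finset.sum_const, nsmul_eq_mul]
  rw [hLS] at hsum
  have : ((L ∩ S).card : ℝ) = (L.card : ℝ) * (N:ℝ)⁻¹ := by linarith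
  rw [this, hx, hN]
  exact mul_div_cancel_right₀ x hNne
end

section
/- Let $\pi, \pi'$ be two disjoint $k$-subspaces of $\mathrm{PG}(n,q)$ with $n \geq 2k+1$, and $\Sigma = \langle \pi, \pi' \rangle$ their span (a $(2k+1)$-subspace). For $0 \le i \le k$, the number of $i$-subspaces of $\Sigma$ disjoint from both $\pi$ and $\pi'$ equals $q^{\binom{i+1}{2}} \binom{k+1}{i+1}_q \prod_{j=0}^{i} (q^{k-j+1} - 1)$. -/
open Finset
open scoped Classical

open Module

lemma gbinom_eq_zero (q : ℕ) : ∀ (a b : ℕ), a < b → gbinom q a b = 0 := by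
  intro a
  induction a with
  | zero => intro b hb; match b, hb with | b+1, _ => rfl
  | succ a ih =>
    intro b hb
    match b, hb with
    | b+1, hb =>
      show gbinom q a b + q^(b+1) * gbinom q a (b+1) = 0
      rw [ih b (by omega), ih (b+1) (by omega)]
      ring

lemma gbinom_mul (q : ℕ) (hq : 1 ≤ q) : ∀ m d : ℕ, d ≤ m →
    gbinom q m d * ∏ j ∈ range d, (q^(j+1) - 1) = ∏ j ∈ range d, (q^(m-j) - 1) := by
  intro m
  induction m with
  | zero => intro d hd; interval_cases d; simp [gbinom]
  | succ m ih =>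
    intro d hd
    cases d with
    | zero => simp [gbinom]
    | succ d =>
      have hdm : d ≤ m := by omega
      have h1 := ih d hdm
      have h2 : gbinom q m (d+1) * ∏ j ∈ range (d+1), (q^(j+1) - 1)
          = (∏ j ∈ range d, (q^(m-j) - 1)) * (q^(m-d) - 1) := by
        rcases Nat.lt_or_ge d m with hlt | hge
        · rw [ih (d+1) hlt, Finset.prod_range_succ]
        · have hde : d = m := le_antisymm hdm hge
          subst hde
          rw [gbinom_eq_zero q d (d+1) (by omega)]
          simp
      rw [Finset.prod_range_succ] at h2
      have hR : ∏ j ∈ range (d+1), (q^(m+1-j) - 1)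
          = (∏ j ∈ range d, (q^(m-j) - 1)) * (q^(m+1) - 1) := by
        rw [Finset.prod_range_succ']
        congr 1
        exact Finset.prod_congr rfl fun j _ => by congr 2; omega
      have hG : gbinom q (m+1) (d+1) = gbinom q m d + q^(d+1) * gbinom q m (d+1) := rfl
      rw [hG, hR, Finset.prod_range_succ]
      -- pass to ℤ
      set A := ∏ j ∈ range d, (q^(m-j) - 1) with hA
      set P := ∏ j ∈ range d, (q^(j+1) - 1) with hP
      have e1 : (1:ℕ) ≤ q^(d+1) := Nat.one_le_pow _ _ (by omega)
      have e2 : (1:ℕ) ≤ q^(m-d) := Nat.one_le_pow _ _ (by omega)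
      have e3 : (1:ℕ) ≤ q^(m+1) := Nat.one_le_pow _ _ (by omega)
      have hpow : q^(d+1) * q^(m-d) = q^(m+1) := by rw [← pow_add]; congr 1; omega
      zify [e1, e2, e3] at h1 h2 hpow ⊢
      linear_combination ((q:ℤ)^(d+1)-1) * h1 + (q:ℤ)^(d+1) * h2 + (A:ℤ) * hpow

lemma sum_range_id_eq (d : ℕ) : ∑ j ∈ range d, j = d.choose 2 := by
  rw [Nat.choose_two_right, ← Finset.sum_range_id_mul_two d]
  omega

lemma prod_q_pow_sub (q : ℕ) (hq : 1 ≤ q) (m d : ℕ) (hd : d ≤ m) :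
    ∏ j ∈ range d, (q^m - q^j) = q^(d.choose 2) * ∏ j ∈ range d, (q^(m-j) - 1) := by
  have h : ∀ j ∈ range d, q^m - q^j = q^j * (q^(m-j) - 1) := by
    intro j hj
    have hjd := Finset.mem_range.mp hj
    rw [Nat.mul_sub, mul_one, ← pow_add]
    congr 2
    omega
  rw [Finset.prod_congr rfl h, Finset.prod_mul_distrib, Finset.prod_pow_eq_pow_sum,
    sum_range_id_eq]

lemma prod_reflect (q d : ℕ) :
    ∏ j ∈ range d, (q^(d-j) - 1) = ∏ j ∈ range d, (q^(j+1) - 1) := by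
  rw [← Finset.prod_range_reflect (fun j => q^(j+1) - 1) d]
  exact Finset.prod_congr rfl fun j hj => by
    congr 2; have := Finset.mem_range.mp hj; omega

lemma prod_master (q m d : ℕ) (hq : 1 ≤ q) (hd : d ≤ m) :
    ∏ j ∈ range d, (q^m - q^j) = gbinom q m d * ∏ j ∈ range d, (q^d - q^j) := by
  rw [prod_q_pow_sub q hq m d hd, prod_q_pow_sub q hq d d le_rfl, prod_reflect,
    ← gbinom_mul q hq m d hd]
  ring


section
variable {F : Type} [Field F] [Fintype F]
variable {V : Type} [AddCommGroup V] [Module F V] [FiniteDimensional F V]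
variable {W : Type} [AddCommGroup W] [Module F W] [FiniteDimensional F W]

lemma card_inj_maps (d : ℕ) (hV : finrank F V = d) (hd : d ≤ finrank F W) :
    Nat.card {g : V →ₗ[F] W // Function.Injective g}
      = ∏ j ∈ range d, (Fintype.card F ^ finrank F W - Fintype.card F ^ j) := by
  classical
  haveI : Finite W := Module.finite_of_finite F
  let b : Basis (Fin d) F V := Module.finBasisOfFinrankEq F V hV
  have key : ∀ w : Fin d → W, LinearIndependent F w ↔ Function.Injective (b.constr F w) := by
    intro w
    constructor
    · intro hw
      rw [← LinearMap.ker_eq_bot, LinearMap.ker_eq_bot']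
      intro x hx
      have hxr : x = ∑ i, b.repr x i • b i := (Basis.sum_repr b x).symm
      have : ∑ i, b.repr x i • w i = 0 := by
        calc ∑ i, b.repr x i • w i = b.constr F w x := by
              conv_rhs => rw [hxr]
              simp [map_sum, Basis.constr_basis]
          _ = 0 := hx
      have hz := Fintype.linearIndependent_iff.mp hw (fun i => b.repr x i) this
      rw [hxr]
      simp [hz]
    · intro hg
      have := b.linearIndependent.map' (b.constr F w) (LinearMap.ker_eq_bot.mpr hg)
      have hcomp : ⇑(b.constr F w) ∘ ⇑b = w := by
        funext i; exact b.constr_basis F w i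
      rwa [hcomp] at this
  have e : {w : Fin d → W // LinearIndependent F w} ≃ {g : V →ₗ[F] W // Function.Injective g} :=
    Equiv.subtypeEquiv (b.constr F).toEquiv key
  rw [← Nat.card_congr e, card_linearIndependent hd]
  exact Fin.prod_univ_eq_prod_range
    (fun j => Fintype.card F ^ finrank F W - Fintype.card F ^ j) d

lemma card_subspaces_s14 (d : ℕ) (hd : d ≤ finrank F V) :
    Nat.card {P : Submodule F V // finrank F ↥P = d}
      = gbinom (Fintype.card F) (finrank F V) d := by
  classical
  haveI : Finite V := Module.finite_of_finite F
  haveI : Finite (Submodule F V) := Finite.of_injective _ SetLike.coe_injective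
  set q := Fintype.card F with hq
  set m := finrank F V with hm
  let f : {v : Fin d → V // LinearIndependent F v} → {P : Submodule F V // finrank F ↥P = d} :=
    fun v => ⟨Submodule.span F (Set.range v.1), by
      rw [finrank_span_eq_card v.2, Fintype.card_fin]⟩
  have fib : ∀ P : {P : Submodule F V // finrank F ↥P = d},
      {x : {v : Fin d → V // LinearIndependent F v} // f x = P}
        ≃ {w : Fin d → ↥P.1 // LinearIndependent F w} := by
    intro P
    refine ⟨fun x => ⟨fun i => ⟨x.1.1 i, ?_⟩, ?_⟩, fun w => ⟨⟨fun i => (w.1 i : V), ?_⟩, ?_⟩, ?_, ?_⟩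
    · have h : Submodule.span F (Set.range x.1.1) = P.1 := congrArg Subtype.val x.2
      exact h ▸ Submodule.subset_span (Set.mem_range_self i)
    · exact LinearIndependent.of_comp P.1.subtype (by exact x.1.2)
    · exact w.2.map' P.1.subtype (Submodule.ker_subtype P.1)
    · apply Subtype.ext
      show Submodule.span F (Set.range fun i => ((w.1 i : V))) = P.1
      have h1 : (Set.range fun i => ((w.1 i : V))) = P.1.subtype '' Set.range w.1 := by
        rw [← Set.range_comp]; rfl
      rw [h1, ← Submodule.map_span, w.2.span_eq_top_of_card_eq_finrank'
        (by rw [Fintype.card_fin, P.2]), Submodule.map_top, Submodule.range_subtype]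
    · intro x; apply Subtype.ext; apply Subtype.ext; rfl
    · intro w; apply Subtype.ext; funext i; apply Subtype.ext; rfl
  have hcongr := Nat.card_congr (Equiv.sigmaFiberEquiv f).symm
  rw [card_linearIndependent hd] at hcongr
  haveI : ∀ P : {P : Submodule F V // finrank F ↥P = d}, Finite ↥P.1 :=
    fun P => Module.finite_of_finite F
  have hsum : Nat.card (Σ P : {P : Submodule F V // finrank F ↥P = d},
      {x : {v : Fin d → V // LinearIndependent F v} // f x = P})
      = Nat.card {P : Submodule F V // finrank F ↥P = d} * ∏ j ∈ range d, (q^d - q^j) := by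
    haveI := Fintype.ofFinite {P : Submodule F V // finrank F ↥P = d}
    haveI : Fintype {v : Fin d → V // LinearIndependent F v} := Fintype.ofFinite _
    haveI : ∀ P : {P : Submodule F V // finrank F ↥P = d},
        Fintype {x : {v : Fin d → V // LinearIndependent F v} // f x = P} :=
      fun P => Fintype.ofFinite _
    rw [Nat.card_eq_fintype_card, Fintype.card_sigma]
    have : ∀ P : {P : Submodule F V // finrank F ↥P = d},
        Fintype.card {x : {v : Fin d → V // LinearIndependent F v} // f x = P}
          = ∏ j ∈ range d, (q^d - q^j) := by
      intro P
      rw [← Nat.card_eq_fintype_card, Nat.card_congr (fib P),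
        card_linearIndependent (by rw [P.2])]
      rw [P.2]
      exact Fin.prod_univ_eq_prod_range (fun j => q^d - q^j) d
    rw [Finset.sum_congr rfl (fun P _ => this P), Finset.sum_const, Finset.card_univ,
      smul_eq_mul, Nat.card_eq_fintype_card]
  rw [hsum] at hcongr
  have hq2 : 2 ≤ q := Fintype.one_lt_card
  have hpos : 0 < ∏ j ∈ range d, (q^d - q^j) := by
    apply Finset.prod_pos
    intro j hj
    have h1 := Finset.mem_range.mp hj
    have h2 : q^j < q^d := Nat.pow_lt_pow_right (by omega) (by omega)
    omega
  rw [← hq, ← hm, Fin.prod_univ_eq_prod_range (fun j => q^m - q^j) d] at hcongr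
  apply Nat.eq_of_mul_eq_mul_right hpos
  rw [← hcongr]
  exact prod_master q m d (by omega) hd

end

section
variable {F : Type} [Field F] [Fintype F]
variable {V : Type} [AddCommGroup V] [Module F V] [FiniteDimensional F V]
variable {W : Type} [AddCommGroup W] [Module F W] [FiniteDimensional F W]

lemma graphs_equiv (d : ℕ) :
    Nonempty ((Σ P : {P : Submodule F V // finrank F ↥P = d},
        {g : ↥P.1 →ₗ[F] W // Function.Injective g}) ≃
      {U : Submodule F (V × W) // finrank F ↥U = d
        ∧ U ⊓ LinearMap.range (LinearMap.inl F V W) = ⊥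
        ∧ U ⊓ LinearMap.range (LinearMap.inr F V W) = ⊥}) := by
  classical
  have hprodinj : ∀ (P : Submodule F V) (g : ↥P →ₗ[F] W),
      Function.Injective (P.subtype.prod g) := fun P g x y h =>
    Subtype.ext (congrArg Prod.fst h)
  have hmapfst : ∀ (P : Submodule F V) (g : ↥P →ₗ[F] W),
      Submodule.map (LinearMap.fst F V W) (LinearMap.range (P.subtype.prod g)) = P := by
    intro P g
    rw [← LinearMap.range_comp, LinearMap.fst_prod, Submodule.range_subtype]
  let Ψ : (Σ P : {P : Submodule F V // finrank F ↥P = d},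
        {g : ↥P.1 →ₗ[F] W // Function.Injective g}) →
      {U : Submodule F (V × W) // finrank F ↥U = d
        ∧ U ⊓ LinearMap.range (LinearMap.inl F V W) = ⊥
        ∧ U ⊓ LinearMap.range (LinearMap.inr F V W) = ⊥} := by
    refine fun x => ⟨LinearMap.range ((x.1.1.subtype).prod x.2.1), ?_, ?_, ?_⟩
    · rw [LinearMap.finrank_range_of_inj (hprodinj _ _)]
      exact x.1.2
    · rw [eq_bot_iff]
      rintro z hz
      obtain ⟨hz1, hz2⟩ := Submodule.mem_inf.mp hz
      obtain ⟨p, hp⟩ := hz1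
      obtain ⟨v, hv⟩ := hz2
      simp only [LinearMap.prod_apply, Function.prod, Submodule.coe_subtype] at hp
      simp only [LinearMap.inl_apply] at hv
      have h2 : x.2.1 p = 0 := by
        have a1 := congrArg Prod.snd hp
        have a2 := congrArg Prod.snd hv
        simp only at a1 a2
        rw [a1, ← a2]
      have hp0 : p = 0 := x.2.2 (by rw [h2, map_zero])
      rw [Submodule.mem_bot, ← hp, hp0]
      simp
    · rw [eq_bot_iff]
      rintro z hz
      obtain ⟨hz1, hz2⟩ := Submodule.mem_inf.mp hz
      obtain ⟨p, hp⟩ := hz1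
      obtain ⟨v, hv⟩ := hz2
      simp only [LinearMap.prod_apply, Function.prod, Submodule.coe_subtype] at hp
      simp only [LinearMap.inr_apply] at hv
      have h2 : (p : V) = 0 := by
        have a1 := congrArg Prod.fst hp
        have a2 := congrArg Prod.fst hv
        simp only at a1 a2
        rw [a1, ← a2]
      have hp0 : p = 0 := Subtype.ext h2
      rw [Submodule.mem_bot, ← hp, hp0]
      simp
  refine ⟨Equiv.ofBijective Ψ ⟨?_, ?_⟩⟩
  · rintro ⟨⟨P, hP⟩, ⟨g, hg⟩⟩ ⟨⟨P', hP'⟩, ⟨g', hg'⟩⟩ h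
    simp only [Ψ, Subtype.mk.injEq] at h
    have hPP' : P = P' := by rw [← hmapfst P g, ← hmapfst P' g', h]
    subst hPP'
    have hgg' : g = g' := by
      apply LinearMap.ext
      intro p
      have hm : ((p : V), g p) ∈ LinearMap.range (P.subtype.prod g') := by
        rw [← h]
        exact ⟨p, rfl⟩
      obtain ⟨p', hp'⟩ := hm
      simp only [LinearMap.prod_apply, Pi.prod, Submodule.coe_subtype] at hp'
      have h1 : (p' : V) = (p : V) := congrArg Prod.fst hp'
      have h2 : p' = p := Subtype.ext h1
      have h3 := congrArg Prod.snd hp'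
      simp only at h3
      rw [h2] at h3
      exact h3.symm
    subst hgg'
    rfl
  · rintro ⟨U, hU, h1, h2⟩
    set f₁ := (LinearMap.fst F V W).comp U.subtype with hf₁
    have hinj1 : Function.Injective f₁ := by
      rw [← LinearMap.ker_eq_bot, LinearMap.ker_eq_bot']
      intro u hu
      simp only [hf₁, LinearMap.comp_apply, Submodule.coe_subtype, LinearMap.fst_apply] at hu
      have hmem : (u : V × W) ∈ U ⊓ LinearMap.range (LinearMap.inr F V W) :=
        Submodule.mem_inf.mpr ⟨u.2, ⟨(u : V × W).2, by
          apply Prod.ext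
          · simp [hu]
          · simp⟩⟩
      rw [h2, Submodule.mem_bot] at hmem
      exact Subtype.ext hmem
    set P := LinearMap.range f₁ with hPdef
    have hPd : finrank F ↥P = d := by
      rw [hPdef, LinearMap.finrank_range_of_inj hinj1, hU]
    set e : ↥U ≃ₗ[F] ↥P := LinearEquiv.ofInjective f₁ hinj1 with he
    set g : ↥P →ₗ[F] W :=
      ((LinearMap.snd F V W).comp U.subtype).comp (e.symm : ↥P →ₗ[F] ↥U) with hgdef
    have hcoe : ∀ u : ↥U, ((e u : ↥P) : V) = ((u : V × W)).1 := by
      intro u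
      rw [he]
      exact LinearEquiv.ofInjective_apply (f := f₁) (h := hinj1) u
    have hsymmP : ∀ p : ↥P, ((e.symm p : ↥U) : V × W) = ((p : V), g p) := by
      intro p
      apply Prod.ext
      · have := hcoe (e.symm p)
        rw [LinearEquiv.apply_symm_apply] at this
        exact this.symm
      · rw [hgdef]
        rfl
    have hg : Function.Injective g := by
      rw [← LinearMap.ker_eq_bot, LinearMap.ker_eq_bot']
      intro p hp
      have hmem : ((e.symm p : ↥U) : V × W) ∈ U ⊓ LinearMap.range (LinearMap.inl F V W) :=
        Submodule.mem_inf.mpr ⟨(e.symm p).2, ⟨((e.symm p : ↥U) : V × W).1, by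
          apply Prod.ext
          · simp
          · rw [hsymmP p, hp]
            simp⟩⟩
      rw [h1, Submodule.mem_bot] at hmem
      have : e.symm p = 0 := Subtype.ext hmem
      calc p = e (e.symm p) := (LinearEquiv.apply_symm_apply e p).symm
        _ = e 0 := by rw [this]
        _ = 0 := map_zero e
    refine ⟨⟨⟨P, hPd⟩, ⟨g, hg⟩⟩, ?_⟩
    apply Subtype.ext
    show LinearMap.range (P.subtype.prod g) = U
    ext z
    constructor
    · rintro ⟨p, rfl⟩
      have : (P.subtype.prod g) p = ((e.symm p : ↥U) : V × W) := by
        rw [hsymmP p]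
        rfl
      rw [this]
      exact (e.symm p).2
    · intro hz
      refine ⟨e ⟨z, hz⟩, ?_⟩
      have : (P.subtype.prod g) (e ⟨z, hz⟩) = ((e.symm (e ⟨z, hz⟩) : ↥U) : V × W) := by
        rw [hsymmP]
        rfl
      rw [this, LinearEquiv.symm_apply_apply]

lemma card_graphs (d : ℕ) (hd : d ≤ finrank F W) :
    Nat.card {U : Submodule F (V × W) // finrank F ↥U = d
        ∧ U ⊓ LinearMap.range (LinearMap.inl F V W) = ⊥
        ∧ U ⊓ LinearMap.range (LinearMap.inr F V W) = ⊥}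
      = Nat.card {P : Submodule F V // finrank F ↥P = d}
          * ∏ j ∈ range d, (Fintype.card F ^ finrank F W - Fintype.card F ^ j) := by
  classical
  haveI : Finite V := Module.finite_of_finite F
  haveI : Finite W := Module.finite_of_finite F
  haveI : Finite (Submodule F V) := Finite.of_injective _ SetLike.coe_injective
  obtain ⟨E⟩ := graphs_equiv (F := F) (V := V) (W := W) d
  rw [← Nat.card_congr E]
  haveI := Fintype.ofFinite {P : Submodule F V // finrank F ↥P = d}
  haveI : ∀ P : {P : Submodule F V // finrank F ↥P = d},
      Fintype {g : ↥P.1 →ₗ[F] W // Function.Injective g} := by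
    intro P
    haveI : Finite (↥P.1 →ₗ[F] W) :=
      Finite.of_injective (fun g => (g : ↥P.1 → W)) LinearMap.coe_injective
    exact Fintype.ofFinite _
  rw [Nat.card_eq_fintype_card, Fintype.card_sigma]
  have hsummand : ∀ P : {P : Submodule F V // finrank F ↥P = d},
      Fintype.card {g : ↥P.1 →ₗ[F] W // Function.Injective g}
        = ∏ j ∈ range d, (Fintype.card F ^ finrank F W - Fintype.card F ^ j) := by
    intro P
    rw [← Nat.card_eq_fintype_card]
    exact card_inj_maps d P.2 hd
  rw [Finset.sum_congr rfl (fun P _ => hsummand P), Finset.sum_const, Finset.card_univ,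
    smul_eq_mul, Nat.card_eq_fintype_card]

end

set_option synthInstance.maxHeartbeats 1000000 in
set_option maxHeartbeats 1000000 in
/-- For disjoint $k$-subspaces $\pi,\pi'$ of $\mathrm{PG}(n,q)$ spanning
$\Sigma = \langle\pi,\pi'\rangle$, and $0 \le i \le k$, the number of $i$-subspaces of
$\Sigma$ disjoint from both $\pi$ and $\pi'$ equals
$q^{\binom{i+1}{2}}\binom{k+1}{i+1}_q\prod_{j=0}^{i}(q^{k-j+1}-1)$. -/
theorem stmt14 (q n k i : ℕ) (F : Type) [Field F] [Fintype F]
    (hq : Fintype.card F = q) (hn : 2*k + 1 ≤ n) (hi : i ≤ k)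
    (π π' : Submodule F (Fin (n+1) → F))
    (hπ : Module.finrank F π = k + 1) (hπ' : Module.finrank F π' = k + 1)
    (hdisj : π ⊓ π' = ⊥) :
    Nat.card {W : Submodule F (Fin (n+1) → F) //
        Module.finrank F W = i + 1 ∧ W ≤ π ⊔ π' ∧ W ⊓ π = ⊥ ∧ W ⊓ π' = ⊥}
      = q ^ (Nat.choose (i+1) 2) * gbinom q (k+1) (i+1)
          * ∏ j ∈ Finset.range (i+1), (q^(k - j + 1) - 1) := by
  classical
  subst hq
  set q := Fintype.card F with hqdef
  have hq2 : 2 ≤ q := Fintype.one_lt_card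
  let φ : (↥π × ↥π') →ₗ[F] (Fin (n+1) → F) := π.subtype.coprod π'.subtype
  have hφ : Function.Injective φ := by
    rw [← LinearMap.ker_eq_bot, LinearMap.ker_eq_bot']
    rintro ⟨p, p'⟩ hpp
    simp only [φ, LinearMap.coprod_apply, Submodule.coe_subtype] at hpp
    have hmem : (p : Fin (n+1) → F) ∈ π ⊓ π' := Submodule.mem_inf.mpr ⟨p.2, by
      have hneg : (p : Fin (n+1) → F) = -(p' : Fin (n+1) → F) :=
        eq_neg_of_add_eq_zero_left hpp
      rw [hneg]
      exact neg_mem p'.2⟩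
    rw [hdisj, Submodule.mem_bot] at hmem
    have hp' : (p' : Fin (n+1) → F) = 0 := by
      rw [hmem, zero_add] at hpp
      exact hpp
    exact Prod.ext (Subtype.ext hmem) (Subtype.ext hp')
  have hrange : LinearMap.range φ = π ⊔ π' := (Submodule.sup_eq_range π π').symm
  have hinl : Submodule.map φ (LinearMap.range (LinearMap.inl F ↥π ↥π')) = π := by
    rw [← LinearMap.range_comp]
    show LinearMap.range (π.subtype.coprod π'.subtype ∘ₗ LinearMap.inl F ↥π ↥π') = π
    rw [LinearMap.coprod_inl, Submodule.range_subtype]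
  have hinr : Submodule.map φ (LinearMap.range (LinearMap.inr F ↥π ↥π')) = π' := by
    rw [← LinearMap.range_comp]
    show LinearMap.range (π.subtype.coprod π'.subtype ∘ₗ LinearMap.inr F ↥π ↥π') = π'
    rw [LinearMap.coprod_inr, Submodule.range_subtype]
  have E : {U : Submodule F (↥π × ↥π') // Module.finrank F ↥U = i+1
      ∧ U ⊓ LinearMap.range (LinearMap.inl F ↥π ↥π') = ⊥
      ∧ U ⊓ LinearMap.range (LinearMap.inr F ↥π ↥π') = ⊥} ≃
      {W : Submodule F (Fin (n+1) → F) //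
        Module.finrank F W = i + 1 ∧ W ≤ π ⊔ π' ∧ W ⊓ π = ⊥ ∧ W ⊓ π' = ⊥} := by
    refine Equiv.ofBijective (fun U => ⟨Submodule.map φ U.1, ?_, ?_, ?_, ?_⟩) ⟨?_, ?_⟩
    · exact ((Submodule.equivMapOfInjective φ hφ U.1).finrank_eq).symm.trans U.2.1
    · rw [← hrange]
      exact LinearMap.map_le_range
    · calc Submodule.map φ U.1 ⊓ π = Submodule.map φ (U.1 ⊓ LinearMap.range (LinearMap.inl F ↥π ↥π')) := by
            rw [Submodule.map_inf _ hφ, hinl]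
        _ = ⊥ := by rw [U.2.2.1, Submodule.map_bot]
    · calc Submodule.map φ U.1 ⊓ π' = Submodule.map φ (U.1 ⊓ LinearMap.range (LinearMap.inr F ↥π ↥π')) := by
            rw [Submodule.map_inf _ hφ, hinr]
        _ = ⊥ := by rw [U.2.2.2, Submodule.map_bot]
    · intro U U' h
      apply Subtype.ext
      exact Submodule.map_injective_of_injective hφ (congrArg Subtype.val h)
    · rintro ⟨Wm, hW1, hW2, hW3, hW4⟩
      have hmapcomap : Submodule.map φ (Submodule.comap φ Wm) = Wm :=
        Submodule.map_comap_eq_of_le (by rw [hrange]; exact hW2)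
      refine ⟨⟨Submodule.comap φ Wm, ?_, ?_, ?_⟩, ?_⟩
      · exact ((Submodule.equivMapOfInjective φ hφ (Submodule.comap φ Wm)).finrank_eq).trans
          (by rw [hmapcomap]; exact hW1)
      · apply Submodule.map_injective_of_injective hφ
        rw [Submodule.map_inf _ hφ, hmapcomap, hinl, Submodule.map_bot, hW3]
      · apply Submodule.map_injective_of_injective hφ
        rw [Submodule.map_inf _ hφ, hmapcomap, hinr, Submodule.map_bot, hW4]
      · exact Subtype.ext hmapcomap
  rw [← Nat.card_congr E]
  have hfrπ : Module.finrank F ↥π = k + 1 := hπ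
  have hfrπ' : Module.finrank F ↥π' = k + 1 := hπ'
  rw [card_graphs (i+1) (by rw [hfrπ']; omega), card_subspaces_s14 (i+1) (by rw [hfrπ]; omega),
    hfrπ, hfrπ']
  rw [prod_q_pow_sub q (by omega) (k+1) (i+1) (by omega)]
  have hprod : ∏ j ∈ Finset.range (i+1), (q^(k+1-j) - 1)
      = ∏ j ∈ Finset.range (i+1), (q^(k-j+1) - 1) := by
    refine Finset.prod_congr rfl fun j hj => ?_
    have := Finset.mem_range.mp hj
    congr 2
    omega
  rw [hprod]
  ring
end
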